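/- Let p ∈ [0,1] and let D_P, D_N ⊆ ℝⁿ be Lebesgue-measurable sets satisfying the weak partition constraints ∫_{D_P ∩ D_N} P = ∫_{D_P ∩ D_N} N = 0 and ∫_{D_P ∪ D_N} P = ∫_{D_P ∪ D_N} N = 1. If, in addition, D_P ∩ D_N*(p) has positive Lebesgue measure or D_N ∩ D_P*(p) has positive Lebesgue measure, then the inequality is strict: L_b[D_P*(p), D_N*(p)] < L_b[D_P, D_N]. -/

import Mathlib

open MeasureTheory Set

theorem binary_loss_strict
    {n : ℕ} (hn : 1 ≤ n)
    (P N : (Fin n → ℝ) → ℝ)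
    (hPmeas : Measurable P) (hNmeas : Measurable N)
    (hPnn : ∀ r, 0 ≤ P r) (hNnn : ∀ r, 0 ≤ N r)
    (hPint : Integrable P) (hNint : Integrable N)
    (hP1 : ∫ r, P r = 1) (hN1 : ∫ r, N r = 1)
    (p : ℝ) (hp0 : 0 ≤ p) (hp1 : p ≤ 1)
    (DP DN : Set (Fin n → ℝ))
    (hDP : MeasurableSet DP) (hDN : MeasurableSet DN)
    (hintP : ∫ r in DP ∩ DN, P r = 0) (hintN : ∫ r in DP ∩ DN, N r = 0)
    (hunP : ∫ r in DP ∪ DN, P r = 1) (hunN : ∫ r in DP ∪ DN, N r = 1)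
    (hpos : 0 < volume (DP ∩ {r | (1 - p) * N r > p * P r})
      ∨ 0 < volume (DN ∩ {r | p * P r > (1 - p) * N r})) :
    (1 - p) * (∫ r in {r | p * P r > (1 - p) * N r}, N r)
      + p * (∫ r in {r | (1 - p) * N r > p * P r}, P r)
    < (1 - p) * (∫ r in DP, N r) + p * (∫ r in DN, P r) := by
  classical
  set A : Set (Fin n → ℝ) := {r | p * P r > (1 - p) * N r} with hAdef
  set B : Set (Fin n → ℝ) := {r | (1 - p) * N r > p * P r} with hBdef
  set Z : Set (Fin n → ℝ) := {r | p * P r = (1 - p) * N r} with hZdef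
  set f : (Fin n → ℝ) → ℝ := fun r => p * P r - (1 - p) * N r with hfdef
  have hA : MeasurableSet A := measurableSet_lt (hNmeas.const_mul _) (hPmeas.const_mul _)
  have hB : MeasurableSet B := measurableSet_lt (hPmeas.const_mul _) (hNmeas.const_mul _)
  have hZ : MeasurableSet Z := measurableSet_eq_fun (hPmeas.const_mul _) (hNmeas.const_mul _)
  have hfint : Integrable f := (hPint.const_mul p).sub (hNint.const_mul (1 - p))
  -- disjointness facts
  have hdAB : Disjoint A B := by
    rw [Set.disjoint_left]; intro r h1 h2
    have h1' : (1 - p) * N r < p * P r := h1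
    have h2' : p * P r < (1 - p) * N r := h2
    exact absurd (h1'.trans h2') (lt_irrefl _)
  have hdABZ : Disjoint (A ∪ B) Z := by
    rw [Set.disjoint_left]; intro r h1 h2
    have h2' : p * P r = (1 - p) * N r := h2
    rcases h1 with h | h
    · have h' : (1 - p) * N r < p * P r := h
      exact absurd h2' (ne_of_gt h')
    · have h' : p * P r < (1 - p) * N r := h
      exact absurd h2'.symm (ne_of_gt h')
  have hABZ : A ∪ B ∪ Z = univ := by
    ext r; simp only [Set.mem_union, Set.mem_setOf_eq, Set.mem_univ, iff_true, A, B, Z]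
    rcases lt_trichotomy (p * P r) ((1 - p) * N r) with h | h | h
    · exact Or.inl (Or.inr h)
    · exact Or.inr h
    · exact Or.inl (Or.inl h)
  -- step 1 : ∫_{DN} P = 1 - ∫_{DP} P
  have key : ∀ g : (Fin n → ℝ) → ℝ, Integrable g →
      (∫ r in DP ∩ DN, g r = 0) → (∫ r in DP ∪ DN, g r = (∫ r in DP, g r) + ∫ r in DN, g r) := by
    intro g hg hg0
    have h1 : ∫ r in DP ∪ DN, g r = (∫ r in DP, g r) + ∫ r in DN \ DP, g r := by
      rw [← Set.union_diff_self]
      exact setIntegral_union disjoint_sdiff_self_right (hDN.diff hDP)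
        hg.integrableOn hg.integrableOn
    have h2 : ∫ r in DN, g r = (∫ r in DN ∩ DP, g r) + ∫ r in DN \ DP, g r := by
      rw [← setIntegral_union (disjoint_sdiff_self_right.mono_left inter_subset_right)
        (hDN.diff hDP) hg.integrableOn hg.integrableOn, Set.inter_union_diff]
    rw [Set.inter_comm DN DP] at h2
    rw [h1, h2, hg0]; ring
  have e1 : ∫ r in DN, P r = 1 - ∫ r in DP, P r := by
    have := key P hPint hintP; rw [hunP] at this; linarith
  -- step 2 : split ∫ P over A, B, Z
  have hsplitP : (1 : ℝ) = (∫ r in A, P r) + (∫ r in B, P r) + (∫ r in Z, P r) := by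
    rw [← hP1, ← setIntegral_univ (f := P), ← hABZ,
      setIntegral_union hdABZ hZ hPint.integrableOn hPint.integrableOn,
      setIntegral_union hdAB hB hPint.integrableOn hPint.integrableOn]
  have e2 : ∫ r in B, P r = 1 - (∫ r in A, P r) - ∫ r in Z, P r := by linarith
  -- step 3 : split ∫_{DP} f
  have hDPsplit : DP = (DP ∩ A) ∪ (DP ∩ B) ∪ (DP ∩ Z) := by
    rw [← Set.inter_union_distrib_left, ← Set.inter_union_distrib_left, hABZ, Set.inter_univ]
  have e3 : ∫ r in DP, f r = (∫ r in DP ∩ A, f r) + ∫ r in DP ∩ B, f r := by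
    nth_rewrite 1 [hDPsplit]
    rw [setIntegral_union (hdABZ.mono (by
        exact Set.union_subset (inter_subset_right.trans subset_union_left)
          (inter_subset_right.trans subset_union_right)) inter_subset_right)
      (hDP.inter hZ) hfint.integrableOn hfint.integrableOn,
      setIntegral_union (hdAB.mono inter_subset_right inter_subset_right)
      (hDP.inter hB) hfint.integrableOn hfint.integrableOn]
    have : ∫ r in DP ∩ Z, f r = 0 :=
      setIntegral_eq_zero_of_forall_eq_zero (fun x hx => by
        have : p * P x = (1 - p) * N x := hx.2
        simp [f, this])
    rw [this]; ring
  -- step 4 : split ∫_A f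
  have e4 : ∫ r in A, f r = (∫ r in DP ∩ A, f r) + ∫ r in A \ DP, f r := by
    rw [Set.inter_comm DP A,
      ← setIntegral_union (disjoint_sdiff_self_right.mono_left inter_subset_right)
      (hA.diff hDP) hfint.integrableOn hfint.integrableOn, Set.inter_union_diff]
  -- expansions
  have expand : ∀ s : Set (Fin n → ℝ),
      ∫ r in s, f r = p * (∫ r in s, P r) - (1 - p) * ∫ r in s, N r := by
    intro s
    rw [hfdef]
    rw [integral_sub ((hPint.const_mul p).integrableOn) ((hNint.const_mul (1 - p)).integrableOn),
      integral_const_mul, integral_const_mul]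
  have e5 := expand A
  have e6 := expand DP
  -- inequalities
  have i1 : ∫ r in DP ∩ B, f r ≤ 0 :=
    setIntegral_nonpos (hDP.inter hB) (fun x hx => by
      have : (1 - p) * N x > p * P x := hx.2
      simp only [Pi.zero_apply, f]; linarith)
  have i2 : 0 ≤ ∫ r in A \ DP, f r :=
    setIntegral_nonneg (hA.diff hDP) (fun x hx => by
      have : p * P x > (1 - p) * N x := hx.1
      simp only [Pi.zero_apply, f]; linarith)
  have i3 : 0 ≤ p * ∫ r in Z, P r :=
    mul_nonneg hp0 (setIntegral_nonneg hZ (fun x _ => hPnn x))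
  -- strictness
  have strict : (∫ r in DP ∩ B, f r) < 0 ∨ 0 < ∫ r in A \ DP, f r := by
    rcases hpos with h | h
    · left
      have hneg : 0 < ∫ r in DP ∩ B, -f r := by
        rw [setIntegral_pos_iff_support_of_nonneg_ae]
        · refine lt_of_lt_of_le h (measure_mono ?_)
          intro x hx
          refine ⟨?_, hx⟩
          have : (1 - p) * N x > p * P x := hx.2
          simp only [Function.mem_support, f]
          intro hc; rw [neg_eq_zero, sub_eq_zero] at hc; exact absurd hc (ne_of_lt this)
        · refine (ae_restrict_iff' (hDP.inter hB)).2 (ae_of_all _ fun x hx => ?_)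
          have : (1 - p) * N x > p * P x := hx.2
          simp only [Pi.zero_apply, f]; linarith
        · exact hfint.neg.integrableOn
      have := integral_neg (μ := volume.restrict (DP ∩ B)) f
      rw [this] at hneg; linarith
    · right
      -- first : DN ∩ A ∩ DP is null
      have hnull : volume (DN ∩ A ∩ DP) = 0 := by
        have hPz : P =ᵐ[volume.restrict (DP ∩ DN)] 0 :=
          (setIntegral_eq_zero_iff_of_nonneg_ae
            ((ae_restrict_iff' (hDP.inter hDN)).2 (ae_of_all _ fun x _ => hPnn x))
            hPint.integrableOn).1 hintP
        have hNz : N =ᵐ[volume.restrict (DP ∩ DN)] 0 :=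
          (setIntegral_eq_zero_iff_of_nonneg_ae
            ((ae_restrict_iff' (hDP.inter hDN)).2 (ae_of_all _ fun x _ => hNnn x))
            hNint.integrableOn).1 hintN
        have hae : ∀ᵐ x ∂(volume.restrict (DP ∩ DN)), x ∉ A := by
          filter_upwards [hPz, hNz] with x h1 h2
          simp only [Set.mem_setOf_eq, A, h1, h2, Pi.zero_apply, mul_zero, gt_iff_lt,
            lt_irrefl, not_false_iff]
        rw [ae_restrict_iff' (hDP.inter hDN)] at hae
        have : ∀ᵐ x ∂(volume : Measure (Fin n → ℝ)), x ∉ DN ∩ A ∩ DP := by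
          filter_upwards [hae] with x hx
          intro hmem
          exact hx ⟨hmem.2, hmem.1.1⟩ hmem.1.2
        exact measure_eq_zero_iff_ae_notMem.2 this
      have hsub : 0 < volume ((DN ∩ A) \ DP) := by
        by_contra hc
        push_neg at hc
        have hc0 : volume ((DN ∩ A) \ DP) = 0 := le_antisymm hc zero_le
        have : volume (DN ∩ A) = 0 := by
          have : volume (DN ∩ A) ≤ volume ((DN ∩ A) \ DP) + volume (DN ∩ A ∩ DP) := by
            refine le_trans (measure_mono ?_) (measure_union_le _ _)
            intro x hx
            by_cases hxp : x ∈ DP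
            · exact Or.inr ⟨hx, hxp⟩
            · exact Or.inl ⟨hx, hxp⟩
          rw [hc0, hnull] at this; simpa using this
        rw [this] at h; exact lt_irrefl _ h
      have hposint : 0 < ∫ r in (DN ∩ A) \ DP, f r := by
        rw [setIntegral_pos_iff_support_of_nonneg_ae]
        · refine lt_of_lt_of_le hsub (measure_mono ?_)
          intro x hx
          refine ⟨?_, hx⟩
          have : p * P x > (1 - p) * N x := hx.1.2
          simp only [Function.mem_support, f]
          intro hc; rw [sub_eq_zero] at hc; exact absurd hc (ne_of_gt this)
        · refine (ae_restrict_iff' ((hDN.inter hA).diff hDP)).2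
            (ae_of_all _ fun x hx => ?_)
          have : p * P x > (1 - p) * N x := hx.1.2
          simp only [Pi.zero_apply, f]; linarith
        · exact hfint.integrableOn
      have hmono : (∫ r in (DN ∩ A) \ DP, f r) ≤ ∫ r in A \ DP, f r := by
        refine setIntegral_mono_set hfint.integrableOn ?_ ?_
        · refine (ae_restrict_iff' (hA.diff hDP)).2 (ae_of_all _ fun x hx => ?_)
          have : p * P x > (1 - p) * N x := hx.1
          simp only [Pi.zero_apply, f]; linarith
        · exact ae_of_all _ (fun x hx => ⟨hx.1.2, hx.2⟩)
      linarith
  -- finish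
  rw [e1, e2]
  rcases strict with h | h
  · nlinarith [e3, e4, e5, e6, i1, i2, i3]
  · nlinarith [e3, e4, e5, e6, i1, i2, i3]
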